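/- Let L be a finite-dimensional real Lie algebra and suppose its complexification ℂ ⊗[ℝ] L (with its canonical structure of complex Lie algebra obtained by base change) admits a symmetric ℂ-bilinear form B that is invariant (B(⁅x,y⁆, z) = B(x, ⁅y,z⁆) for all x, y, z) and non-degenerate. Then L admits a symmetric, invariant, non-degenerate ℝ-bilinear form; i.e. every real form of a quasi-classical complex Lie algebra is quasi-classical. -/

import Mathlib

open TensorProduct

/-- If the complexification `ℂ ⊗[ℝ] L` of a finite-dimensional real Lie algebra
`L` admits a symmetric, invariant, non-degenerate ℂ-bilinear form, then `L` admits a symmetric,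
invariant, non-degenerate ℝ-bilinear form: every real form of a quasi-classical complex Lie
algebra is quasi-classical. -/
theorem realForm_of_quasiClassical_complexification
    (L : Type*) [LieRing L] [LieAlgebra ℝ L] [FiniteDimensional ℝ L]
    (B : (ℂ ⊗[ℝ] L) →ₗ[ℂ] (ℂ ⊗[ℝ] L) →ₗ[ℂ] ℂ)
    (hsymm : ∀ x y, B x y = B y x)
    (hinv : ∀ x y z, B ⁅x, y⁆ z = B x ⁅y, z⁆)
    (hnondeg : ∀ x, (∀ y, B x y = 0) → x = 0) :
    ∃ B' : L →ₗ[ℝ] L →ₗ[ℝ] ℝ,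
      (∀ x y, B' x y = B' y x) ∧
      (∀ x y z, B' ⁅x, y⁆ z = B' x ⁅y, z⁆) ∧
      (∀ x, (∀ y, B' x y = 0) → x = 0) := by
  classical
  set b := Module.finBasis ℝ L with hb
  set bC := b.baseChange ℂ with hbC
  -- Gram matrix of B over the complexified basis
  set M := LinearMap.BilinForm.toMatrix bC B with hM
  have hdet : M.det ≠ 0 :=
    (LinearMap.BilinForm.nondegenerate_iff_det_ne_zero bC).mp
      ⟨hnondeg, fun y hy => hnondeg y (fun x => by rw [hsymm]; exact hy x)⟩
  -- the polynomial det(Re M + X Im M)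
  set Q : Matrix (Fin (Module.finrank ℝ L)) (Fin (Module.finrank ℝ L)) (Polynomial ℝ) :=
    Matrix.of fun i j => Polynomial.C (M i j).re + Polynomial.X * Polynomial.C (M i j).im with hQ
  set P : Polynomial ℝ := Q.det with hP
  have hmap : Q.map (Polynomial.eval₂RingHom (algebraMap ℝ ℂ) Complex.I) = M := by
    ext i j
    simp only [hQ, Matrix.map_apply, Matrix.of_apply,
      Polynomial.coe_eval₂RingHom, Polynomial.eval₂_add, Polynomial.eval₂_mul,
      Polynomial.eval₂_C, Polynomial.eval₂_X]
    apply Complex.ext <;> simp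
  have hPC : Polynomial.eval₂ (algebraMap ℝ ℂ) Complex.I P = M.det := by
    have := RingHom.map_det (Polynomial.eval₂RingHom (algebraMap ℝ ℂ) Complex.I) Q
    rw [RingHom.mapMatrix_apply, hmap] at this
    simpa using this
  have hP0 : P ≠ 0 := by
    intro h
    rw [h] at hPC
    simp at hPC
    exact hdet hPC.symm
  obtain ⟨t, ht⟩ : ∃ t : ℝ, P.eval t ≠ 0 := by
    by_contra h
    push_neg at h
    exact hP0 (Polynomial.zero_of_eval_zero _ h)
  -- define the real bilinear form
  set B' : L →ₗ[ℝ] L →ₗ[ℝ] ℝ := LinearMap.mk₂ ℝ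
    (fun x y => (B ((1 : ℂ) ⊗ₜ[ℝ] x) ((1 : ℂ) ⊗ₜ[ℝ] y)).re
      + t * (B ((1 : ℂ) ⊗ₜ[ℝ] x) ((1 : ℂ) ⊗ₜ[ℝ] y)).im)
    (fun m m' n => by simp [TensorProduct.tmul_add]; ring)
    (fun c m n => by
      simp [TensorProduct.tmul_smul, Complex.real_smul, Complex.mul_re, Complex.mul_im]
      ring)
    (fun m n n' => by simp [TensorProduct.tmul_add]; ring)
    (fun c m n => by
      simp [TensorProduct.tmul_smul, Complex.real_smul, Complex.mul_re, Complex.mul_im]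
      ring) with hB'
  refine ⟨B', ?_, ?_, ?_⟩
  · intro x y
    simp only [hB', LinearMap.mk₂_apply, hsymm ((1 : ℂ) ⊗ₜ[ℝ] x) ((1 : ℂ) ⊗ₜ[ℝ] y)]
  · intro x y z
    have hbr : ∀ u v : L, ((1 : ℂ) ⊗ₜ[ℝ] ⁅u, v⁆ : ℂ ⊗[ℝ] L)
        = ⁅(1 : ℂ) ⊗ₜ[ℝ] u, (1 : ℂ) ⊗ₜ[ℝ] v⁆ := by
      intro u v
      rw [LieAlgebra.ExtendScalars.bracket_tmul, one_mul]
    simp only [hB', LinearMap.mk₂_apply, hbr,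
      hinv ((1 : ℂ) ⊗ₜ[ℝ] x) ((1 : ℂ) ⊗ₜ[ℝ] y) ((1 : ℂ) ⊗ₜ[ℝ] z)]
  · -- nondegeneracy
    have hmat : LinearMap.BilinForm.toMatrix b B' = Q.map (Polynomial.evalRingHom t) := by
      ext i j
      simp only [LinearMap.BilinForm.toMatrix_apply, hB', LinearMap.mk₂_apply, hQ, Matrix.map_apply,
        Matrix.of_apply, Polynomial.coe_evalRingHom, Polynomial.eval_add, Polynomial.eval_mul,
        Polynomial.eval_C, Polynomial.eval_X, hM, LinearMap.BilinForm.toMatrix_apply, hbC,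
        Module.Basis.baseChange_apply]
    have hdet' : (LinearMap.BilinForm.toMatrix b B').det ≠ 0 := by
      have h2 := RingHom.map_det (Polynomial.evalRingHom t) Q
      rw [RingHom.mapMatrix_apply] at h2
      rw [hmat, ← h2]
      simpa using ht
    exact ((LinearMap.BilinForm.nondegenerate_iff_det_ne_zero b).mpr hdet').1
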